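/- Distributional zero-temperature limit of the Concrete relaxation: if ν ~ Uniform[0,1] and α ∈ (0,1), then as δ → 0⁺ the random variables γ̃_δ = sigmoid((logit(α) − logit(ν))/δ) converge in distribution to Bernoulli(α). -/

import Mathlib

open MeasureTheory Filter

noncomputable def logit (x : ℝ) : ℝ := Real.log (x / (1 - x))

noncomputable def sigmoid (x : ℝ) : ℝ := 1 / (1 + Real.exp (-x))

lemma one_add_exp_pos (x : ℝ) : (0:ℝ) < 1 + Real.exp (-x) := by positivity

lemma sigmoid_pos (x : ℝ) : 0 < sigmoid x := by
  unfold sigmoid; positivity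

lemma sigmoid_lt_one (x : ℝ) : sigmoid x < 1 := by
  unfold sigmoid
  rw [div_lt_one (one_add_exp_pos x)]
  linarith [Real.exp_pos (-x)]

lemma sigmoid_strictMono : StrictMono sigmoid := by
  intro a b hab
  unfold sigmoid
  apply one_div_lt_one_div_of_lt (one_add_exp_pos b)
  have := Real.exp_lt_exp.mpr (neg_lt_neg hab)
  linarith

lemma continuous_sigmoid' : Continuous sigmoid := by
  apply continuous_const.div
  · continuity
  · exact fun x => ne_of_gt (one_add_exp_pos x)

lemma measurable_logit : Measurable logit := by
  unfold logit
  exact Real.measurable_log.comp (measurable_id.div (measurable_const.sub measurable_id))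

lemma logit_sigmoid (x : ℝ) : logit (sigmoid x) = x := by
  unfold logit sigmoid
  have h : (0:ℝ) < 1 + Real.exp (-x) := one_add_exp_pos x
  have hne : (1 + Real.exp (-x)) ≠ 0 := ne_of_gt h
  have h1 : 1 - 1 / (1 + Real.exp (-x)) = Real.exp (-x) / (1 + Real.exp (-x)) := by
    field_simp
    ring
  rw [h1]
  have h2 : (1 / (1 + Real.exp (-x))) / (Real.exp (-x) / (1 + Real.exp (-x)))
      = Real.exp x := by
    rw [Real.exp_neg]
    field_simp
  rw [h2, Real.log_exp]

lemma sigmoid_logit {x : ℝ} (hx : x ∈ Set.Ioo (0:ℝ) 1) : sigmoid (logit x) = x := by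
  obtain ⟨h0, h1⟩ := hx
  unfold sigmoid logit
  have hpos : 0 < x / (1 - x) := div_pos h0 (by linarith)
  rw [Real.exp_neg, Real.exp_log hpos]
  rw [inv_div]
  field_simp
  ring

/-- Distributional zero-temperature limit of the Concrete relaxation: the CDF
of `sigmoid((logit α − logit ν)/δ)`, with `ν ~ Uniform[0,1]`, converges as
`δ → 0⁺` to the `Bernoulli(α)` CDF at every continuity point `t ∉ {0,1}`. -/
theorem concrete_zero_temperature_in_distribution (α : ℝ)
    (hα : α ∈ Set.Ioo (0 : ℝ) 1) :
    ∀ t : ℝ, t ≠ 0 → t ≠ 1 →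
      Tendsto (fun δ : ℝ =>
          ((volume.restrict (Set.Icc (0 : ℝ) 1))
            {ν : ℝ | sigmoid ((logit α - logit ν) / δ) ≤ t}).toReal)
        (nhdsWithin 0 (Set.Ioi 0))
        (nhds (if t < 0 then 0 else if t < 1 then 1 - α else 1)) := by
  obtain ⟨hα0, hα1⟩ := hα
  intro t ht0 ht1
  by_cases htneg : t < 0
  · rw [if_pos htneg]
    have heq : (fun δ : ℝ =>
        ((volume.restrict (Set.Icc (0 : ℝ) 1))
          {ν : ℝ | sigmoid ((logit α - logit ν) / δ) ≤ t}).toReal) = fun _ => 0 := by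
      funext δ
      have : {ν : ℝ | sigmoid ((logit α - logit ν) / δ) ≤ t} = ∅ := by
        ext ν
        simp only [Set.mem_setOf_eq, Set.mem_empty_iff_false, iff_false, not_le]
        exact lt_trans htneg (sigmoid_pos _)
      rw [this]
      simp
    rw [heq]
    exact tendsto_const_nhds
  rw [if_neg htneg]
  push_neg at htneg
  have ht0' : 0 < t := lt_of_le_of_ne htneg (Ne.symm ht0)
  by_cases htlt : t < 1
  · rw [if_pos htlt]
    set c := logit t with hc
    set f : ℝ → ℝ := fun δ => sigmoid (logit α - δ * c) with hf
    have hσt : sigmoid c = t := sigmoid_logit ⟨ht0', htlt⟩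
    have key : ∀ δ ∈ Set.Ioi (0:ℝ),
        ((volume.restrict (Set.Icc (0 : ℝ) 1))
          {ν : ℝ | sigmoid ((logit α - logit ν) / δ) ≤ t}).toReal = 1 - f δ := by
      intro δ hδ
      have hδ0 : (0:ℝ) < δ := hδ
      have hfδ0 : 0 < f δ := sigmoid_pos _
      have hfδ1 : f δ < 1 := sigmoid_lt_one _
      have hmeas : MeasurableSet {ν : ℝ | sigmoid ((logit α - logit ν) / δ) ≤ t} := by
        have : Measurable (fun ν : ℝ => sigmoid ((logit α - logit ν) / δ)) :=
          continuous_sigmoid'.measurable.comp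
            ((measurable_const.sub measurable_logit).div_const δ)
        exact this measurableSet_Iic
      rw [← restrict_Ioo_eq_restrict_Icc,
        Measure.restrict_apply hmeas]
      have hset : {ν : ℝ | sigmoid ((logit α - logit ν) / δ) ≤ t} ∩ Set.Ioo 0 1
          = Set.Ico (f δ) 1 := by
        ext ν
        simp only [Set.mem_inter_iff, Set.mem_setOf_eq, Set.mem_Ioo, Set.mem_Ico]
        constructor
        · rintro ⟨hcond, hν0, hν1⟩
          refine ⟨?_, hν1⟩
          have h1 : (logit α - logit ν) / δ ≤ c := by
            by_contra h
            push_neg at h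
            have := sigmoid_strictMono h
            rw [hσt] at this
            linarith
          have h2 : logit α - δ * c ≤ logit ν := by
            rw [div_le_iff₀ hδ0] at h1
            linarith [h1]
          have h3 : sigmoid (logit α - δ * c) ≤ sigmoid (logit ν) :=
            sigmoid_strictMono.monotone h2
          rwa [sigmoid_logit ⟨hν0, hν1⟩] at h3
        · rintro ⟨hfν, hν1⟩
          have hν0 : 0 < ν := lt_of_lt_of_le hfδ0 hfν
          refine ⟨?_, hν0, hν1⟩
          have h2 : logit α - δ * c ≤ logit ν := by
            by_contra h
            push_neg at h
            have h3 : sigmoid (logit ν) < sigmoid (logit α - δ * c) :=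
              sigmoid_strictMono h
            rw [sigmoid_logit ⟨hν0, hν1⟩] at h3
            exact absurd hfν (not_le.mpr h3)
          have h1 : (logit α - logit ν) / δ ≤ c := by
            rw [div_le_iff₀ hδ0]
            linarith
          have := sigmoid_strictMono.monotone h1
          rwa [hσt] at this
      rw [hset, Real.volume_Ico, ENNReal.toReal_ofReal (by linarith)]
    have hcongr : (fun δ : ℝ =>
        ((volume.restrict (Set.Icc (0 : ℝ) 1))
          {ν : ℝ | sigmoid ((logit α - logit ν) / δ) ≤ t}).toReal)
          =ᶠ[nhdsWithin 0 (Set.Ioi 0)] fun δ => 1 - f δ := by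
      filter_upwards [self_mem_nhdsWithin] with δ hδ
      exact key δ hδ
    rw [Filter.tendsto_congr' hcongr]
    have hflim : Tendsto f (nhdsWithin 0 (Set.Ioi 0)) (nhds α) := by
      have hcont : Continuous f :=
        continuous_sigmoid'.comp (continuous_const.sub (continuous_id.mul continuous_const))
      have : f 0 = α := by
        simp only [hf, zero_mul, sub_zero]
        exact sigmoid_logit ⟨hα0, hα1⟩
      have := hcont.tendsto 0
      rw [‹f 0 = α›] at this
      exact this.mono_left nhdsWithin_le_nhds
    exact (tendsto_const_nhds.sub hflim)
  · rw [if_neg htlt]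
    push_neg at htlt
    have ht1' : 1 < t := lt_of_le_of_ne htlt (Ne.symm ht1)
    have heq : (fun δ : ℝ =>
        ((volume.restrict (Set.Icc (0 : ℝ) 1))
          {ν : ℝ | sigmoid ((logit α - logit ν) / δ) ≤ t}).toReal) = fun _ => 1 := by
      funext δ
      have : {ν : ℝ | sigmoid ((logit α - logit ν) / δ) ≤ t} = Set.univ := by
        ext ν
        simp only [Set.mem_setOf_eq, Set.mem_univ, iff_true]
        exact le_of_lt (lt_trans (sigmoid_lt_one _) ht1')
      rw [this]
      simp [Real.volume_Icc]
    rw [heq]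
    exact tendsto_const_nhds
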